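/- Let M₁, M₂, M₃, P be real numbers with (M₁, M₂, M₃) ≠ (0,0,0), satisfying M₁² + M₂² + M₃² = (M₃ - (3/2)P)², and excluding the degenerate case M₁ = M₂ = 0 with P = 0. Set q = M₁·i + M₂·j + M₃·k ∈ ℍ, r = ‖q‖, c = M₃ - (3/2)P, n = q/r, m = (c/r)·k, and p = (1/2)(1 - n·m), v = (1/2)(1 + n·m), w = (1/2)(n - m). Then for all real t, exp(t·q)·exp(-t·c·k) = p + cos(2rt)·v + sin(2rt)·w, with ‖v‖ = ‖w‖ ≠ 0 and ⟨v,w⟩ = 0; moreover v·k and w·k lie in the real span of {v, w}. Hence the chain t ↦ exp(t·q)·exp(-t·c·k) of the standard CR structure (a = 1) traces a geometric circle lying in an affine plane whose direction is a complex line for the complex structure given by right quaternion multiplication by k. -/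

import Mathlib

open Quaternion RealInnerProductSpace

private lemma key_mul (C S : ℝ) (x y : ℍ[ℝ]) (h : C^2 + S^2 = 1) :
    ((C : ℍ[ℝ]) + S • x) * ((C : ℍ[ℝ]) - S • y)
      = (1/2 : ℝ) • (1 - x * y) + (C^2 - S^2) • ((1/2 : ℝ) • (1 + x * y))
        + (2 * S * C) • ((1/2 : ℝ) • (x - y)) := by
  ext <;>
    simp only [Quaternion.re_mul, Quaternion.imI_mul, Quaternion.imJ_mul, Quaternion.imK_mul,
      Quaternion.re_add, Quaternion.imI_add, Quaternion.imJ_add, Quaternion.imK_add,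
      Quaternion.re_sub, Quaternion.imI_sub, Quaternion.imJ_sub, Quaternion.imK_sub,
      Quaternion.re_smul, Quaternion.imI_smul, Quaternion.imJ_smul, Quaternion.imK_smul,
      Quaternion.re_coe, Quaternion.imI_coe, Quaternion.imJ_coe, Quaternion.imK_coe,
      Quaternion.re_one, Quaternion.imI_one, Quaternion.imJ_one, Quaternion.imK_one,
      smul_eq_mul]
  · linear_combination ((1 - (x.re*y.re - x.imI*y.imI - x.imJ*y.imJ - x.imK*y.imK))/2) * h
  · linear_combination (-(x.re*y.imI + x.imI*y.re + x.imJ*y.imK - x.imK*y.imJ)/2) * h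
  · linear_combination (-(x.re*y.imJ - x.imI*y.imK + x.imJ*y.re + x.imK*y.imI)/2) * h
  · linear_combination (-(x.re*y.imK + x.imI*y.imJ - x.imJ*y.imI + x.imK*y.re)/2) * h

private lemma exp_smul_im (u : ℍ[ℝ]) (hu : u.re = 0) (s : ℝ) (hs : ‖u‖ = s)
    (hspos : 0 < s) (t : ℝ) :
    NormedSpace.exp (t • u) = ((Real.cos (s * t) : ℝ) : ℍ[ℝ]) + (Real.sin (s * t) / s) • u := by
  rcases eq_or_ne t 0 with rfl | ht
  · simp
  · rw [Quaternion.exp_of_re_eq_zero (t • u) (by simp [hu])]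
    have hn : ‖t • u‖ = |t| * s := by rw [norm_smul, Real.norm_eq_abs, hs]
    rw [hn, smul_smul]
    have hcos : Real.cos (|t| * s) = Real.cos (s * t) := by
      rcases abs_cases t with ⟨h1, _⟩ | ⟨h1, _⟩
      · rw [h1, mul_comm]
      · rw [h1, mul_comm, mul_neg, Real.cos_neg]
    have hsin : Real.sin (|t| * s) / (|t| * s) * t = Real.sin (s * t) / s := by
      rcases abs_cases t with ⟨h1, _⟩ | ⟨h1, _⟩
      · rw [h1, mul_comm t s]
        field_simp
      · rw [h1, mul_comm (-t) s, mul_neg, Real.sin_neg]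
        have ht' : t < 0 := by cases abs_cases t with
          | inl h => exact absurd h1 (by rw [h.1]; intro he; exact ht (by linarith)
            )
          | inr h => exact h.2
        field_simp
    rw [hcos, hsin]

private abbrev qmk (a b c d : ℝ) : ℍ[ℝ] := ⟨a, b, c, d⟩

set_option maxHeartbeats 2000000 in
theorem standard_chains_are_circles_on_complex_lines
    (M₁ M₂ M₃ P : ℝ)
    (hne : ¬(M₁ = 0 ∧ M₂ = 0 ∧ M₃ = 0))
    (hlight : M₁ ^ 2 + M₂ ^ 2 + M₃ ^ 2 = (M₃ - (3/2) * P) ^ 2)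
    (hdeg : ¬(M₁ = 0 ∧ M₂ = 0 ∧ P = 0))
    (q kq n m p v w : ℍ[ℝ]) (r c : ℝ)
    (hq : q = ⟨0, M₁, M₂, M₃⟩) (hkq : kq = ⟨0, 0, 0, 1⟩)
    (hr : r = ‖q‖) (hc : c = M₃ - (3/2) * P)
    (hn : n = r⁻¹ • q) (hm : m = (c / r) • kq)
    (hp : p = (1/2 : ℝ) • (1 - n * m))
    (hv : v = (1/2 : ℝ) • (1 + n * m))
    (hw : w = (1/2 : ℝ) • (n - m)) :
    (∀ t : ℝ, NormedSpace.exp (t • q) * NormedSpace.exp (-((t * c) • kq)) =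
        p + Real.cos (2 * r * t) • v + Real.sin (2 * r * t) • w) ∧
    ‖v‖ = ‖w‖ ∧ ‖v‖ ≠ 0 ∧ ⟪v, w⟫ = 0 ∧
    v * kq ∈ Submodule.span ℝ ({v, w} : Set ℍ[ℝ]) ∧
    w * kq ∈ Submodule.span ℝ ({v, w} : Set ℍ[ℝ]) := by
  replace hq : q = qmk 0 M₁ M₂ M₃ := hq
  replace hkq : kq = qmk 0 0 0 1 := hkq
  have hq0 : q ≠ 0 := by
    rw [hq]
    intro h
    rw [Quaternion.ext_iff] at h
    exact hne ⟨h.2.1, h.2.2.1, h.2.2.2⟩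
  have hr0 : 0 < r := hr ▸ norm_pos_iff.mpr hq0
  have hrne : r ≠ 0 := ne_of_gt hr0
  have hr2 : r ^ 2 = M₁ ^ 2 + M₂ ^ 2 + M₃ ^ 2 := by
    rw [hr, sq, ← Quaternion.normSq_eq_norm_mul_self, hq, Quaternion.normSq_def']
    norm_num
  have hc2 : c ^ 2 = r ^ 2 := by rw [hc, ← hlight, hr2]
  have hcne : c ≠ 0 := by intro h; rw [h] at hc2; nlinarith
  have hkqnorm : ‖kq‖ = 1 := by
    have h1 : ‖kq‖ * ‖kq‖ = 1 := by
      rw [← Quaternion.normSq_eq_norm_mul_self, hkq, Quaternion.normSq_def']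
      norm_num
    rcases mul_self_eq_one_iff.mp h1 with h | h
    · exact h
    · nlinarith [norm_nonneg kq]
  have hv' : v = qmk ((1 - M₃*c/r^2)/2) (M₂*c/r^2/2) (-(M₁*c/r^2)/2) 0 := by
    rw [hv, hn, hm, hq, hkq]
    ext <;>
      simp only [Quaternion.re_mul, Quaternion.imI_mul, Quaternion.imJ_mul, Quaternion.imK_mul,
        Quaternion.re_add, Quaternion.imI_add, Quaternion.imJ_add, Quaternion.imK_add,
        Quaternion.re_smul, Quaternion.imI_smul, Quaternion.imJ_smul, Quaternion.imK_smul,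
        Quaternion.re_one, Quaternion.imI_one, Quaternion.imJ_one, Quaternion.imK_one,
        smul_eq_mul] <;>
      field_simp <;> (first | ring1 | (left; (first | trivial | ring1)))
  have hw' : w = qmk 0 (M₁/r/2) (M₂/r/2) ((M₃/r - c/r)/2) := by
    rw [hw, hn, hm, hq, hkq]
    ext <;>
      simp only [Quaternion.re_sub, Quaternion.imI_sub, Quaternion.imJ_sub, Quaternion.imK_sub,
        Quaternion.re_smul, Quaternion.imI_smul, Quaternion.imJ_smul, Quaternion.imK_smul,
        smul_eq_mul] <;>
      field_simp <;> (first | ring1 | (left; (first | trivial | ring1)))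
  have hv2 : ‖v‖ ^ 2 = (r^2 - M₃*c)/(2*r^2) := by
    rw [sq, ← Quaternion.normSq_eq_norm_mul_self, hv', Quaternion.normSq_def']
    field_simp
    ring_nf
    linear_combination (-c^2) * hr2 + (r^2) * hc2
  have hw2 : ‖w‖ ^ 2 = (r^2 - M₃*c)/(2*r^2) := by
    rw [sq, ← Quaternion.normSq_eq_norm_mul_self, hw', Quaternion.normSq_def']
    field_simp
    ring_nf
    linear_combination (-1 : ℝ) * hr2 + (1 : ℝ) * hc2
  have hnormvw : ‖v‖ = ‖w‖ := by
    rw [← Real.sqrt_sq (norm_nonneg v), ← Real.sqrt_sq (norm_nonneg w), hv2, hw2]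
  have hkey : r ^ 2 - M₃ * c ≠ 0 := by
    intro h
    have hcM : c = M₃ := by
      have h2 : c * (c - M₃) = 0 := by linear_combination hc2 + h
      rcases mul_eq_zero.mp h2 with h3 | h3
      · exact absurd h3 hcne
      · linarith
    have hP : P = 0 := by rw [hcM] at hc; linarith
    have hsum : M₁ ^ 2 + M₂ ^ 2 = 0 := by
      linear_combination (-1 : ℝ) * hr2 - hc2 + (c + M₃) * hcM
    have h1 : M₁ = 0 := by
      have : M₁ ^ 2 = 0 := le_antisymm (by nlinarith [sq_nonneg M₂]) (sq_nonneg M₁)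
      exact pow_eq_zero_iff (two_ne_zero) |>.mp this
    have h2 : M₂ = 0 := by
      have : M₂ ^ 2 = 0 := le_antisymm (by nlinarith [sq_nonneg M₁]) (sq_nonneg M₂)
      exact pow_eq_zero_iff (two_ne_zero) |>.mp this
    exact hdeg ⟨h1, h2, hP⟩
  have hvne : ‖v‖ ≠ 0 := by
    intro h
    apply hkey
    rw [h] at hv2
    field_simp at hv2
    linarith
  have hinner : ⟪v, w⟫ = 0 := by
    rw [Quaternion.inner_def, hv', hw']
    simp only [Quaternion.re_mul, Quaternion.re_star, Quaternion.imI_star, Quaternion.imJ_star,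
      Quaternion.imK_star]
    field_simp
    ring
  have hcr : c = r ∨ c = -r := by
    have h2 : (c - r) * (c + r) = 0 := by linear_combination hc2
    rcases mul_eq_zero.mp h2 with h3 | h3
    · left; linarith
    · right; linarith
  have hvk : v * kq = (-(c/r)) • w := by
    rcases hcr with h | h <;> subst h <;> rw [hv', hw', hkq] <;>
      ext <;>
      simp only [Quaternion.re_mul, Quaternion.imI_mul, Quaternion.imJ_mul, Quaternion.imK_mul,
        Quaternion.re_smul, Quaternion.imI_smul, Quaternion.imJ_smul, Quaternion.imK_smul,
        smul_eq_mul] <;>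
      field_simp <;> ring1
  have hwk : w * kq = (c/r) • v := by
    rcases hcr with h | h <;> subst h <;> rw [hv', hw', hkq] <;>
      ext <;>
      simp only [Quaternion.re_mul, Quaternion.imI_mul, Quaternion.imJ_mul, Quaternion.imK_mul,
        Quaternion.re_smul, Quaternion.imI_smul, Quaternion.imJ_smul, Quaternion.imK_smul,
        smul_eq_mul] <;>
      field_simp <;> ring1
  have hexp1 : ∀ t : ℝ, NormedSpace.exp (t • q)
      = ((Real.cos (r * t) : ℝ) : ℍ[ℝ]) + (Real.sin (r * t) / r) • q :=
    fun t => exp_smul_im q (by rw [hq]) r hr.symm hr0 t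
  have hexpk : ∀ s : ℝ, NormedSpace.exp (s • kq)
      = ((Real.cos s : ℝ) : ℍ[ℝ]) + (Real.sin s) • kq := by
    intro s
    have := exp_smul_im kq (by rw [hkq]) 1 hkqnorm one_pos s
    simpa using this
  refine ⟨fun t => ?_, hnormvw, hvne, hinner, ?_, ?_⟩
  · have h1 : NormedSpace.exp (t • q)
        = ((Real.cos (r * t) : ℝ) : ℍ[ℝ]) + Real.sin (r * t) • n := by
      rw [hexp1 t, hn, smul_smul, div_eq_mul_inv]
    have h2 : NormedSpace.exp (-((t * c) • kq))
        = ((Real.cos (r * t) : ℝ) : ℍ[ℝ]) - Real.sin (r * t) • m := by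
      rw [← neg_smul, hexpk (-(t * c)), hm, Real.cos_neg, Real.sin_neg, smul_smul]
      rcases hcr with h | h
      · rw [h]
        rw [mul_comm t r, div_self hrne, mul_one, neg_smul, sub_eq_add_neg]
      · rw [h]
        rw [mul_neg, mul_comm t r, Real.cos_neg, Real.sin_neg, neg_neg, neg_div, div_self hrne,
          mul_neg_one, neg_smul, sub_neg_eq_add]
    rw [h1, h2, key_mul (Real.cos (r * t)) (Real.sin (r * t)) n m
      (by linarith [Real.sin_sq_add_cos_sq (r * t)])]
    have hcos2 : Real.cos (2 * r * t) = Real.cos (r * t) ^ 2 - Real.sin (r * t) ^ 2 := by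
      rw [show (2 : ℝ) * r * t = 2 * (r * t) by ring, Real.cos_two_mul]
      linarith [Real.sin_sq_add_cos_sq (r * t)]
    have hsin2 : Real.sin (2 * r * t) = 2 * Real.sin (r * t) * Real.cos (r * t) := by
      rw [show (2 : ℝ) * r * t = 2 * (r * t) by ring, Real.sin_two_mul]
    rw [hcos2, hsin2, hp, hv, hw]
  · rw [hvk]
    exact Submodule.smul_mem _ _ (Submodule.subset_span (Set.mem_insert_of_mem _ rfl))
  · rw [hwk]
    exact Submodule.smul_mem _ _ (Submodule.subset_span (Set.mem_insert _ _))
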